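/- arXiv:2509.18202 — 2 statements merged into one kernel-verified Lean document; each statement's English description precedes it below -/
import Mathlib

section
/- Let 0 < ρ < 1/3, ρ < λ < (1−ρ)/2, and let E be the attractor of {ρx, ρx+λ, ρx+1−ρ}. If f(x) = rx + t with 0 < r < 1 and f(E) ⊆ E, then there exists i ∈ {1,2,3} such that f(E) ⊆ φᵢ(E), where φ₁(x)=ρx, φ₂(x)=ρx+λ, φ₃(x)=ρx+1−ρ. -/
namespace PRIP

structure Cfg (ρ lam : ℝ) (E : Set ℝ) : Prop where
  hρ0 : 0 < ρ
  hρ3 : ρ < 1 / 3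
  hl1 : ρ < lam
  hl2 : lam < (1 - ρ) / 2
  hEc : IsCompact E
  hEne : E.Nonempty
  hE : E = (fun x : ℝ => ρ * x) '' E ∪ (fun x : ℝ => ρ * x + lam) '' E ∪
      (fun x : ℝ => ρ * x + (1 - ρ)) '' E

variable {ρ lam : ℝ} {E : Set ℝ}

/-- case analysis on membership -/
lemma Cfg.cases (h : Cfg ρ lam E) {x : ℝ} (hx : x ∈ E) :
    (∃ y ∈ E, x = ρ * y) ∨ (∃ y ∈ E, x = ρ * y + lam) ∨ (∃ y ∈ E, x = ρ * y + (1 - ρ)) := by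
  rw [h.hE] at hx
  rcases hx with (⟨y, hy, hxy⟩ | ⟨y, hy, hxy⟩) | ⟨y, hy, hxy⟩
  · exact Or.inl ⟨y, hy, hxy.symm⟩
  · exact Or.inr (Or.inl ⟨y, hy, hxy.symm⟩)
  · exact Or.inr (Or.inr ⟨y, hy, hxy.symm⟩)

lemma Cfg.img1 (h : Cfg ρ lam E) {x : ℝ} (hx : x ∈ E) : ρ * x ∈ E := by
  rw [h.hE]
  exact Or.inl (Or.inl ⟨x, hx, rfl⟩)

lemma Cfg.img2 (h : Cfg ρ lam E) {x : ℝ} (hx : x ∈ E) : ρ * x + lam ∈ E := by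
  rw [h.hE]
  exact Or.inl (Or.inr ⟨x, hx, rfl⟩)

lemma Cfg.img3 (h : Cfg ρ lam E) {x : ℝ} (hx : x ∈ E) : ρ * x + (1 - ρ) ∈ E := by
  rw [h.hE]
  exact Or.inr ⟨x, hx, rfl⟩

lemma Cfg.sub01 (h : Cfg ρ lam E) : E ⊆ Set.Icc 0 1 := by
  have hρ1 : ρ < 1 := by linarith [h.hρ3]
  have hlam0 : 0 < lam := lt_trans h.hρ0 h.hl1
  have hM : sSup E ∈ E := h.hEc.sSup_mem h.hEne
  have hm : sInf E ∈ E := h.hEc.sInf_mem h.hEne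
  have hMub : ∀ x ∈ E, x ≤ sSup E := fun x hx => le_csSup h.hEc.bddAbove hx
  have hmlb : ∀ x ∈ E, sInf E ≤ x := fun x hx => csInf_le h.hEc.bddBelow hx
  have hM1 : sSup E ≤ 1 := by
    rcases h.cases hM with ⟨y, hy, hxy⟩ | ⟨y, hy, hxy⟩ | ⟨y, hy, hxy⟩ <;>
      [skip; skip; skip] <;>
    · have := hMub y hy
      nlinarith [h.hρ0, h.hl2]
  have hm0 : 0 ≤ sInf E := by
    rcases h.cases hm with ⟨y, hy, hxy⟩ | ⟨y, hy, hxy⟩ | ⟨y, hy, hxy⟩ <;>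
    · have := hmlb y hy
      nlinarith [h.hρ0]
  intro x hx
  exact ⟨le_trans hm0 (hmlb x hx), le_trans (hMub x hx) hM1⟩

lemma Cfg.zero_mem (h : Cfg ρ lam E) : (0 : ℝ) ∈ E := by
  have hρ1 : ρ < 1 := by linarith [h.hρ3]
  have hm : sInf E ∈ E := h.hEc.sInf_mem h.hEne
  have h1 : sInf E ≤ ρ * sInf E := csInf_le h.hEc.bddBelow (h.img1 hm)
  have h2 : 0 ≤ sInf E := (h.sub01 hm).1
  have : sInf E = 0 := by nlinarith
  rwa [this] at hm

lemma Cfg.one_mem (h : Cfg ρ lam E) : (1 : ℝ) ∈ E := by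
  have hρ1 : ρ < 1 := by linarith [h.hρ3]
  have hM : sSup E ∈ E := h.hEc.sSup_mem h.hEne
  have h1 : ρ * sSup E + (1 - ρ) ≤ sSup E := le_csSup h.hEc.bddAbove (h.img3 hM)
  have h2 : sSup E ≤ 1 := (h.sub01 hM).2
  have : sSup E = 1 := by nlinarith
  rwa [this] at hM


lemma Cfg.tri (h : Cfg ρ lam E) {x : ℝ} (hx : x ∈ E) :
    x ≤ ρ ∨ (lam ≤ x ∧ x ≤ lam + ρ) ∨ 1 - ρ ≤ x := by
  rcases h.cases hx with ⟨y, hy, hxy⟩ | ⟨y, hy, hxy⟩ | ⟨y, hy, hxy⟩ <;>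
    rcases h.sub01 hy with ⟨hy0, hy1⟩
  · left; nlinarith [h.hρ0]
  · right; left; constructor <;> nlinarith [h.hρ0]
  · right; right; nlinarith [h.hρ0]

lemma Cfg.dec1 (h : Cfg ρ lam E) {x : ℝ} (hx : x ∈ E) (hxρ : x ≤ ρ) :
    ∃ y ∈ E, x = ρ * y := by
  have h2ρ : ρ < 1 - ρ := by linarith [h.hρ3]
  rcases h.cases hx with hc | ⟨y, hy, hxy⟩ | ⟨y, hy, hxy⟩
  · exact hc
  · rcases h.sub01 hy with ⟨hy0, _⟩; nlinarith [h.hl1, h.hρ0]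
  · rcases h.sub01 hy with ⟨hy0, _⟩; nlinarith [h.hρ0]

lemma Cfg.dec2 (h : Cfg ρ lam E) {x : ℝ} (hx : x ∈ E) (hx1 : lam ≤ x) (hx2 : x ≤ lam + ρ) :
    ∃ y ∈ E, x = ρ * y + lam := by
  have hlr : lam + ρ < 1 - ρ := by linarith [h.hρ3, h.hl2]
  rcases h.cases hx with ⟨y, hy, hxy⟩ | hc | ⟨y, hy, hxy⟩
  · rcases h.sub01 hy with ⟨_, hy1⟩; nlinarith [h.hl1, h.hρ0]
  · exact hc
  · rcases h.sub01 hy with ⟨hy0, _⟩; nlinarith [h.hρ0]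

lemma Cfg.dec3 (h : Cfg ρ lam E) {x : ℝ} (hx : x ∈ E) (hx1 : 1 - ρ ≤ x) :
    ∃ y ∈ E, x = ρ * y + (1 - ρ) := by
  have hlr : lam + ρ < 1 - ρ := by linarith [h.hρ3, h.hl2]
  have h2ρ : ρ < 1 - ρ := by linarith [h.hρ3]
  rcases h.cases hx with ⟨y, hy, hxy⟩ | ⟨y, hy, hxy⟩ | hc
  · rcases h.sub01 hy with ⟨_, hy1⟩; nlinarith [h.hρ0]
  · rcases h.sub01 hy with ⟨_, hy1⟩; nlinarith [h.hρ0]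
  · exact hc

lemma Cfg.free1 (h : Cfg ρ lam E) {z : ℝ} (hz : z ∈ E) (h1 : ρ < z) (h2 : z < lam) : False := by
  have hlr : lam + ρ < 1 - ρ := by linarith [h.hρ3, h.hl2]
  rcases h.tri hz with hc | ⟨hc, _⟩ | hc <;> linarith [h.hρ0]

lemma Cfg.free2 (h : Cfg ρ lam E) {z : ℝ} (hz : z ∈ E)
    (h1 : lam + ρ < z) (h2 : z < 1 - ρ) : False := by
  have : ρ < lam := h.hl1
  rcases h.tri hz with hc | ⟨_, hc⟩ | hc <;> linarith [h.hρ0]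

/-- sSup of E ∩ [0,c] : a "gap left endpoint" helper. -/
lemma Cfg.supIcc (h : Cfg ρ lam E) {c : ℝ} (hc : 0 ≤ c) :
    sSup (E ∩ Set.Icc 0 c) ∈ E ∧ sSup (E ∩ Set.Icc 0 c) ≤ c ∧
      ∀ z ∈ E, z ≤ c → z ≤ sSup (E ∩ Set.Icc 0 c) := by
  have hK : IsCompact (E ∩ Set.Icc 0 c) := h.hEc.inter_right isClosed_Icc
  have hne : (E ∩ Set.Icc 0 c).Nonempty := ⟨0, h.zero_mem, le_refl 0, hc⟩
  have hmem := hK.sSup_mem hne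
  exact ⟨hmem.1, hmem.2.2, fun z hz hzc =>
    le_csSup hK.bddAbove ⟨hz, (h.sub01 hz).1, hzc⟩⟩

/-- sInf of E ∩ [d,u] with u ∈ E : a "gap right endpoint" helper. -/
lemma Cfg.infIcc (h : Cfg ρ lam E) {d u : ℝ} (hdu : d ≤ u) (hu : u ∈ E) :
    sInf (E ∩ Set.Icc d u) ∈ E ∧ d ≤ sInf (E ∩ Set.Icc d u) ∧
      sInf (E ∩ Set.Icc d u) ≤ u ∧
      ∀ z ∈ E, d ≤ z → z ≤ u → sInf (E ∩ Set.Icc d u) ≤ z := by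
  have hK : IsCompact (E ∩ Set.Icc d u) := h.hEc.inter_right isClosed_Icc
  have hne : (E ∩ Set.Icc d u).Nonempty := ⟨u, hu, hdu, le_refl u⟩
  have hmem := hK.sInf_mem hne
  exact ⟨hmem.1, hmem.2.1, hmem.2.2, fun z hz h1 h2 =>
    csInf_le hK.bddBelow ⟨hz, h1, h2⟩⟩


/-- Structure of gaps of E: a gap is either short (≤ lam - ρ) or is an affine image of
the big gap (lam+ρ, 1-ρ), with witness map δ•+τ preserving E. -/
lemma Cfg.gapStruct (h : Cfg ρ lam E) : ∀ n : ℕ, ∀ a ∈ E, ∀ b ∈ E, a < b →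
    (∀ z ∈ E, a < z → z < b → False) → ρ ^ n < b - a →
    b - a ≤ lam - ρ ∨
      ∃ δ τ : ℝ, 0 < δ ∧ ((δ = 1 ∧ τ = 0) ∨ δ ≤ ρ) ∧ (∀ x ∈ E, δ * x + τ ∈ E) ∧
        δ * (lam + ρ) + τ = a ∧ δ * (1 - ρ) + τ = b := by
  have hρ1 : ρ < 1 := by linarith [h.hρ3]
  have hlr : lam + ρ < 1 - ρ := by linarith [h.hρ3, h.hl2]
  have hρE : ρ ∈ E := by simpa using h.img1 h.one_mem
  have hlamE : lam ∈ E := by simpa using h.img2 h.zero_mem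
  have hlrE : lam + ρ ∈ E := by
    have := h.img2 h.one_mem
    have e : ρ * 1 + lam = lam + ρ := by ring
    rwa [e] at this
  have h1rE : (1 : ℝ) - ρ ∈ E := by simpa using h.img3 h.zero_mem
  intro n
  induction n with
  | zero =>
    intro a ha b hb hab hfree hlen
    exfalso
    rcases h.sub01 ha with ⟨ha0, _⟩
    rcases h.sub01 hb with ⟨_, hb1⟩
    simp only [pow_zero] at hlen
    linarith
  | succ n ih =>
    intro a ha b hb hab hfree hlen
    -- generic same-piece descent
    have key : ∀ c : ℝ, (∀ x ∈ E, ρ * x + c ∈ E) →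
        ∀ xa ∈ E, ∀ xb ∈ E, a = ρ * xa + c → b = ρ * xb + c →
        b - a ≤ lam - ρ ∨
          ∃ δ τ : ℝ, 0 < δ ∧ ((δ = 1 ∧ τ = 0) ∨ δ ≤ ρ) ∧ (∀ x ∈ E, δ * x + τ ∈ E) ∧
            δ * (lam + ρ) + τ = a ∧ δ * (1 - ρ) + τ = b := by
      intro c himg xa hxa xb hxb ea eb
      have hxab : xa < xb := by nlinarith [h.hρ0]
      have hfree' : ∀ z ∈ E, xa < z → z < xb → False := by
        intro z hz h1 h2
        exact hfree (ρ * z + c) (himg z hz) (by nlinarith [h.hρ0]) (by nlinarith [h.hρ0])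
      have hlen' : ρ ^ n < xb - xa := by
        have e : ρ ^ (n + 1) = ρ ^ n * ρ := pow_succ ρ n
        rw [e] at hlen
        have hba : b - a = ρ * (xb - xa) := by rw [ea, eb]; ring
        nlinarith [h.hρ0, pow_pos h.hρ0 n]
      rcases ih xa hxa xb hxb hxab hfree' hlen' with hshort | ⟨δ, τ, hδ0, hδc, hmap, e1, e2⟩
      · left
        have hba : b - a = ρ * (xb - xa) := by rw [ea, eb]; ring
        nlinarith [h.hρ0, h.hl1]
      · right
        refine ⟨ρ * δ, ρ * τ + c, mul_pos h.hρ0 hδ0, ?_, ?_, ?_, ?_⟩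
        · right
          rcases hδc with ⟨hδ1, _⟩ | hδρ
          · rw [hδ1]; nlinarith [h.hρ0]
          · nlinarith [h.hρ0]
        · intro x hx
          have hmem := himg (δ * x + τ) (hmap x hx)
          have e : ρ * (δ * x + τ) + c = ρ * δ * x + (ρ * τ + c) := by ring
          rwa [e] at hmem
        · rw [ea, ← e1]; ring
        · rw [eb, ← e2]; ring
    rcases h.tri ha with ha1 | ⟨ha2, ha2'⟩ | ha3 <;> rcases h.tri hb with hb1 | ⟨hb2, hb2'⟩ | hb3
    · -- (1,1)
      obtain ⟨xa, hxa, ea⟩ := h.dec1 ha ha1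
      obtain ⟨xb, hxb, eb⟩ := h.dec1 hb hb1
      exact key 0 (fun x hx => by simpa using h.img1 hx) xa hxa xb hxb
        (by rw [ea]; ring) (by rw [eb]; ring)
    · -- (1,2) : a = ρ, b = lam
      have haρ : a = ρ := by
        by_contra hne
        have : a < ρ := lt_of_le_of_ne ha1 hne
        exact hfree ρ hρE this (by linarith [h.hl1])
      have hblam : b = lam := by
        have hb' : ¬ lam < b := fun hlt => hfree lam hlamE (by rw [haρ]; exact h.hl1) hlt
        linarith [hb2, not_lt.mp hb']
      left; rw [haρ, hblam]
    · -- (1,3) impossible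
      exact (hfree lam hlamE (by linarith [h.hl1]) (by linarith [h.hρ0])).elim
    · -- (2,1) order contra
      exfalso; nlinarith [h.hl1]
    · -- (2,2)
      obtain ⟨xa, hxa, ea⟩ := h.dec2 ha ha2 ha2'
      obtain ⟨xb, hxb, eb⟩ := h.dec2 hb hb2 hb2'
      exact key lam (fun x hx => h.img2 hx) xa hxa xb hxb ea eb
    · -- (2,3) : the big gap itself
      have ha' : a = lam + ρ := by
        have : ¬ a < lam + ρ := fun hlt => hfree (lam + ρ) hlrE hlt (by linarith)
        linarith [ha2', not_lt.mp this]
      have hb' : b = 1 - ρ := by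
        have : ¬ (1 - ρ) < b := fun hlt => hfree (1 - ρ) h1rE (by rw [ha']; exact hlr) hlt
        linarith [hb3, not_lt.mp this]
      right
      exact ⟨1, 0, one_pos, Or.inl ⟨rfl, rfl⟩, fun x hx => by simpa using hx,
        by rw [ha']; ring, by rw [hb']; ring⟩
    · -- (3,1) order contra
      exfalso; nlinarith [h.hρ0, h.hρ3]
    · -- (3,2) order contra
      exfalso; nlinarith [h.hρ0, hlr]
    · -- (3,3)
      obtain ⟨xa, hxa, ea⟩ := h.dec3 ha ha3
      obtain ⟨xb, hxb, eb⟩ := h.dec3 hb hb3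
      exact key (1 - ρ) (fun x hx => h.img3 hx) xa hxa xb hxb ea eb


/-- weak gap bound -/
lemma Cfg.gap_le (h : Cfg ρ lam E) {a b : ℝ} (ha : a ∈ E) (hb : b ∈ E) (hab : a < b)
    (hfree : ∀ z ∈ E, a < z → z < b → False) : b - a ≤ 1 - 2*ρ - lam := by
  have hρ1 : ρ < 1 := by linarith [h.hρ3]
  obtain ⟨n, hn⟩ := exists_pow_lt_of_lt_one (show (0:ℝ) < b - a by linarith) hρ1
  rcases h.gapStruct n a ha b hb hab hfree hn with hshort | ⟨δ, τ, hδ0, hδc, _, e1, e2⟩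
  · linarith [h.hl2, h.hρ0]
  · have hba : b - a = δ * (1 - 2*ρ - lam) := by rw [← e1, ← e2]; ring
    have hδ1 : δ ≤ 1 := by rcases hδc with ⟨h1, _⟩ | h2 <;> linarith
    have hg2 : 0 < 1 - 2*ρ - lam := by linarith [h.hρ3, h.hl2]
    nlinarith

/-- The G2-crossing contradiction for maps of T into E. -/
lemma Cfg.topMapCross (h : Cfg ρ lam E)
    (hstrict : lam - ρ < (lam + ρ) * (1 - 2*ρ - lam))
    {s v : ℝ} (hs : 0 < s) (hs1 : s * (lam + ρ) ≤ 1)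
    (hmap : ∀ x ∈ E, x ≤ lam + ρ → s * x + v ∈ E)
    (hv : v ≤ lam + ρ) (htop : 1 - ρ ≤ s * (lam + ρ) + v) : False := by
  have hρ1 : ρ < 1 := by linarith [h.hρ3]
  have hlr : lam + ρ < 1 - ρ := by linarith [h.hρ3, h.hl2]
  have hg2 : 0 < 1 - 2*ρ - lam := by linarith [h.hρ3, h.hl2]
  have hlρ0 : 0 < lam + ρ := by linarith [h.hρ0, h.hl1]
  have hlrE : lam + ρ ∈ E := by
    have := h.img2 h.one_mem
    have e : ρ * 1 + lam = lam + ρ := by ring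
    rwa [e] at this
  set al := (lam + ρ - v) / s with hal
  set be := (1 - ρ - v) / s with hbe
  have hal0 : 0 ≤ al := div_nonneg (by linarith) (le_of_lt hs)
  have hbeL : be ≤ lam + ρ := by
    rw [hbe, div_le_iff₀ hs]
    nlinarith
  have halbe : al < be := by
    rw [hal, hbe]
    exact (div_lt_div_iff_of_pos_right hs).mpr (by linarith)
  obtain ⟨haE, haal, hamax⟩ := h.supIcc hal0
  obtain ⟨hbE, hbbe, hbL, hbmin⟩ := h.infIcc hbeL hlrE
  set a := sSup (E ∩ Set.Icc 0 al) with hadef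
  set b := sInf (E ∩ Set.Icc be (lam + ρ)) with hbdef
  have hab : a < b := lt_of_le_of_lt haal (lt_of_lt_of_le halbe hbbe)
  have hfree : ∀ z ∈ E, a < z → z < b → False := by
    intro z hz h1z h2z
    by_cases hcz : z ≤ al
    · exact absurd (hamax z hz hcz) (not_le.mpr h1z)
    · push_neg at hcz
      by_cases hcz2 : be ≤ z
      · exact absurd (hbmin z hz hcz2 (le_trans (le_of_lt h2z) hbL))
          (not_le.mpr h2z)
      · push_neg at hcz2
        have hzL : z ≤ lam + ρ := le_trans (le_of_lt hcz2) hbeL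
        have hmem := hmap z hz hzL
        have hlo : lam + ρ < s * z + v := by
          have : lam + ρ - v < s * z := by
            rw [hal, div_lt_iff₀ hs] at hcz
            linarith [mul_comm s z]
          linarith
        have hhi : s * z + v < 1 - ρ := by
          have : s * z < 1 - ρ - v := by
            rw [hbe, lt_div_iff₀ hs] at hcz2
            linarith [mul_comm s z]
          linarith
        exact h.free2 hmem hlo hhi
  have hlen : (1 - 2*ρ - lam) / s ≤ b - a := by
    have e : be - al = (1 - 2*ρ - lam) / s := by
      rw [hal, hbe, div_sub_div_same]
      ring_nf
    linarith
  have hlen2 : (1 - 2*ρ - lam) * (lam + ρ) ≤ (1 - 2*ρ - lam) / s := by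
    rw [le_div_iff₀ hs]
    nlinarith
  obtain ⟨n, hn⟩ := exists_pow_lt_of_lt_one
    (show (0:ℝ) < b - a by linarith) hρ1
  rcases h.gapStruct n a haE b hbE hab hfree hn with hshort | ⟨δ, τ, hδ0, hδc, _, e1, e2⟩
  · nlinarith
  · rcases hδc with ⟨hδ1, hτ0⟩ | hδρ
    · -- gap is G2 itself: b = 1-ρ > lam+ρ, contradiction
      rw [hδ1, hτ0] at e2
      simp at e2
      linarith [hbL, hlr]
    · have hba : b - a = δ * (1 - 2*ρ - lam) := by rw [← e1, ← e2]; ring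
      nlinarith [h.hρ0, h.hl1]

/-- The key induction killing top-anchored maps of T = E ∩ [0, lam+ρ] into E. -/
lemma Cfg.topMap (h : Cfg ρ lam E)
    (hstrict : lam - ρ < (lam + ρ) * (1 - 2*ρ - lam)) :
    ∀ n : ℕ, ∀ s v : ℝ, 0 < s → ρ ^ n < s * (lam + ρ) → s * (lam + ρ) ≤ 1 →
      (∀ x ∈ E, x ≤ lam + ρ → s * x + v ∈ E) →
      s * (lam + ρ) + v ≤ 1 →
      1 - s * (1 - 2*ρ - lam) ≤ s * (lam + ρ) + v → False := by
  have hρ1 : ρ < 1 := by linarith [h.hρ3]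
  have hlr : lam + ρ < 1 - ρ := by linarith [h.hρ3, h.hl2]
  have hg2 : 0 < 1 - 2*ρ - lam := by linarith [h.hρ3, h.hl2]
  have hlρ0 : 0 < lam + ρ := by linarith [h.hρ0, h.hl1]
  have hlrE : lam + ρ ∈ E := by
    have := h.img2 h.one_mem
    have e : ρ * 1 + lam = lam + ρ := by ring
    rwa [e] at this
  intro n
  induction n with
  | zero =>
    intro s v hs hm hs1 _ _ _
    simp only [pow_zero] at hm
    linarith
  | succ n ih =>
    intro s v hs hm hs1 hmap h1 h2
    have hv : v ∈ E := by
      have := hmap 0 h.zero_mem (le_of_lt hlρ0)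
      simpa using this
    have hv0 : 0 ≤ v := (h.sub01 hv).1
    have hHl : s * (lam + ρ) + v ∈ E := hmap (lam + ρ) hlrE (le_refl _)
    by_cases hc1 : s * (lam + ρ) + v ≤ lam + ρ
    · -- forces s > 1 and then v < 0
      have hs2 : 1 < s := by nlinarith [h.hρ0, hg2]
      nlinarith [hlρ0]
    · push_neg at hc1
      have htop : 1 - ρ ≤ s * (lam + ρ) + v := by
        rcases h.tri hHl with hx | ⟨_, hx⟩ | hx
        · exfalso; linarith [h.hl1, h.hρ0]
        · exfalso; linarith
        · exact hx
      rcases h.tri hv with hvc | ⟨_, hvc⟩ | hvc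
      · -- v ≤ ρ ≤ lam+ρ : the G2-crossing contradiction
        exact h.topMapCross hstrict hs hs1 hmap (by linarith [h.hρ0, h.hl1]) htop
      · exact h.topMapCross hstrict hs hs1 hmap hvc htop
      · -- v ≥ 1-ρ : zoom into φ₃ and recurse
        have hwidth : s * (lam + ρ) ≤ ρ := by linarith
        have hx0 : ∀ x ∈ E, x ≤ lam + ρ → ∃ y ∈ E, s * x + v = ρ * y + (1 - ρ) := by
          intro x hx hxle
          have hmem := hmap x hx hxle
          have hxpos : 0 ≤ x := (h.sub01 hx).1
          have : 1 - ρ ≤ s * x + v := by nlinarith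
          exact h.dec3 hmem this
        refine ih (s / ρ) ((v - (1 - ρ)) / ρ) (div_pos hs h.hρ0) ?_ ?_ ?_ ?_ ?_
        · have e : s / ρ * (lam + ρ) = s * (lam + ρ) / ρ := by ring
          rw [e, lt_div_iff₀ h.hρ0]
          calc ρ ^ n * ρ = ρ ^ (n+1) := (pow_succ ρ n).symm
            _ < s * (lam + ρ) := hm
        · have e : s / ρ * (lam + ρ) = s * (lam + ρ) / ρ := by ring
          rw [e, div_le_one h.hρ0]; exact hwidth
        · intro x hx hxle
          obtain ⟨y, hy, hey⟩ := hx0 x hx hxle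
          have e : s / ρ * x + (v - (1 - ρ)) / ρ = (s * x + v - (1 - ρ)) / ρ := by ring
          rw [e, hey]
          have e2 : (ρ * y + (1 - ρ) - (1 - ρ)) / ρ = y := by
            rw [add_sub_cancel_right]
            exact mul_div_cancel_left₀ y (ne_of_gt h.hρ0)
          rwa [e2]
        · rw [show s / ρ * (lam + ρ) + (v - (1 - ρ)) / ρ
              = (s * (lam + ρ) + v - (1 - ρ)) / ρ by ring, div_le_one h.hρ0]
          linarith
        · rw [← mul_le_mul_iff_left₀ h.hρ0]
          have e1 : (1 - s / ρ * (1 - 2*ρ - lam)) * ρ = ρ - s * (1 - 2*ρ - lam) := by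
            field_simp [ne_of_gt h.hρ0]
          have e2 : (s / ρ * (lam + ρ) + (v - (1 - ρ)) / ρ) * ρ
              = s * (lam + ρ) + v - (1 - ρ) := by
            field_simp [ne_of_gt h.hρ0]
            ring
          rw [e1, e2]
          linarith


/-- crossing the big gap (cases (1,3) and (2,3)) is impossible -/
lemma Cfg.crossG2 (h : Cfg ρ lam E) {r t : ℝ} (hr0 : 0 < r) (hr1 : r < 1)
    (hf : ∀ x ∈ E, r * x + t ∈ E) (ht : t ≤ lam + ρ) (htop : 1 - ρ ≤ r + t) : False := by
  have hρ1 : ρ < 1 := by linarith [h.hρ3]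
  have hlr : lam + ρ < 1 - ρ := by linarith [h.hρ3, h.hl2]
  have hg2 : 0 < 1 - 2*ρ - lam := by linarith [h.hρ3, h.hl2]
  set al := (lam + ρ - t) / r with hal
  set be := (1 - ρ - t) / r with hbe
  have hal0 : 0 ≤ al := div_nonneg (by linarith) (le_of_lt hr0)
  have hbe1 : be ≤ 1 := by rw [hbe, div_le_iff₀ hr0]; linarith
  have halbe : al < be := by
    rw [hal, hbe]
    exact (div_lt_div_iff_of_pos_right hr0).mpr (by linarith)
  obtain ⟨haE, haal, hamax⟩ := h.supIcc hal0
  obtain ⟨hbE, hbbe, hb1, hbmin⟩ := h.infIcc hbe1 h.one_mem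
  set a := sSup (E ∩ Set.Icc 0 al)
  set b := sInf (E ∩ Set.Icc be 1)
  have hab : a < b := lt_of_le_of_lt haal (lt_of_lt_of_le halbe hbbe)
  have hfree : ∀ z ∈ E, a < z → z < b → False := by
    intro z hz h1z h2z
    by_cases hcz : z ≤ al
    · exact absurd (hamax z hz hcz) (not_le.mpr h1z)
    · push_neg at hcz
      by_cases hcz2 : be ≤ z
      · exact absurd (hbmin z hz hcz2 (h.sub01 hz).2) (not_le.mpr h2z)
      · push_neg at hcz2
        have hmem := hf z hz
        have hlo : lam + ρ < r * z + t := by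
          rw [hal, div_lt_iff₀ hr0] at hcz
          nlinarith
        have hhi : r * z + t < 1 - ρ := by
          rw [hbe, lt_div_iff₀ hr0] at hcz2
          nlinarith
        exact h.free2 hmem hlo hhi
  have hlen : (1 - 2*ρ - lam) / r ≤ b - a := by
    have e : be - al = (1 - 2*ρ - lam) / r := by
      rw [hal, hbe, div_sub_div_same]; ring_nf
    linarith
  have : (1 - 2*ρ - lam) < (1 - 2*ρ - lam) / r := by
    rw [lt_div_iff₀ hr0]; nlinarith
  linarith [h.gap_le haE hbE hab hfree]

lemma strict_aux {ρ lam : ℝ} (hρ0 : 0 < ρ) (hl1 : ρ < lam)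
    (hg2 : 0 < 1 - 2*ρ - lam)
    (hstar : (lam - ρ) * (lam + ρ) ≤ ρ * (1 - 2*ρ - lam)) :
    lam - ρ < (lam + ρ) * (1 - 2*ρ - lam) := by
  have hlρ0 : 0 < lam + ρ := by linarith
  have hlam0 : 0 < lam := by linarith
  rcases le_or_gt ((lam + ρ)^2) ρ with hcase | hcase
  · have kA : lam - ρ ≤ (lam + ρ) - 2*(lam + ρ)^2 := by nlinarith
    have kB : (lam + ρ)*(2*ρ + lam) < 2*(lam + ρ)^2 := by nlinarith
    have kC : (lam + ρ)*(1 - 2*ρ - lam) = (lam + ρ) - (lam + ρ)*(2*ρ + lam) := by ring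
    rw [kC]; linarith
  · have k1 : ρ * (1 - 2*ρ - lam) < (lam + ρ)^2 * (1 - 2*ρ - lam) :=
      mul_lt_mul_of_pos_right hcase hg2
    rw [← mul_lt_mul_iff_left₀ hlρ0]
    have k3 : (lam + ρ) * (1 - 2*ρ - lam) * (lam + ρ) = (lam + ρ)^2 * (1 - 2*ρ - lam) := by
      ring
    linarith

set_option maxHeartbeats 1000000 in
/-- crossing the small gap (case (1,2)) is impossible -/
lemma Cfg.crossG1 (h : Cfg ρ lam E) {r t : ℝ} (hr0 : 0 < r) (hr1 : r < 1)
    (hf : ∀ x ∈ E, r * x + t ∈ E) (ht : t ≤ ρ) (hmid1 : lam ≤ r + t) : False := by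
  have hρ1 : ρ < 1 := by linarith [h.hρ3]
  have hρne : ρ ≠ 0 := ne_of_gt h.hρ0
  have hlr : lam + ρ < 1 - ρ := by linarith [h.hρ3, h.hl2]
  have hg2 : 0 < 1 - 2*ρ - lam := by linarith [h.hρ3, h.hl2]
  have hg1 : 0 < lam - ρ := by linarith [h.hl1]
  have hlρ0 : 0 < lam + ρ := by linarith [h.hρ0, h.hl1]
  set c := (ρ - t) / r with hc
  set d := (lam - t) / r with hd
  have hc0 : 0 ≤ c := div_nonneg (by linarith) (le_of_lt hr0)
  have hd1 : d ≤ 1 := by rw [hd, div_le_iff₀ hr0]; linarith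
  have hcd : c < d := by
    rw [hc, hd]
    exact (div_lt_div_iff_of_pos_right hr0).mpr (by linarith [h.hl1])
  obtain ⟨haE, hac, hamax⟩ := h.supIcc hc0
  obtain ⟨hbE, hbd, hb1, hbmin⟩ := h.infIcc hd1 h.one_mem
  set a := sSup (E ∩ Set.Icc 0 c)
  set b := sInf (E ∩ Set.Icc d 1)
  have hab : a < b := lt_of_le_of_lt hac (lt_of_lt_of_le hcd hbd)
  have hfree : ∀ z ∈ E, a < z → z < b → False := by
    intro z hz h1z h2z
    by_cases hcz : z ≤ c
    · exact absurd (hamax z hz hcz) (not_le.mpr h1z)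
    · push_neg at hcz
      by_cases hcz2 : d ≤ z
      · exact absurd (hbmin z hz hcz2 (h.sub01 hz).2) (not_le.mpr h2z)
      · push_neg at hcz2
        have hmem := hf z hz
        have hlo : ρ < r * z + t := by
          rw [hc, div_lt_iff₀ hr0] at hcz
          nlinarith
        have hhi : r * z + t < lam := by
          rw [hd, lt_div_iff₀ hr0] at hcz2
          nlinarith
        exact h.free1 hmem hlo hhi
  have hdc : d - c = (lam - ρ) / r := by
    rw [hc, hd, div_sub_div_same]; ring_nf
  have hlen : (lam - ρ) / r ≤ b - a := by linarith
  have hlengt : lam - ρ < b - a := by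
    have : (lam - ρ) < (lam - ρ) / r := by
      rw [lt_div_iff₀ hr0]; nlinarith
    linarith
  obtain ⟨n, hn⟩ := exists_pow_lt_of_lt_one (show (0:ℝ) < b - a by linarith) hρ1
  rcases h.gapStruct n a haE b hbE hab hfree hn with hshort | ⟨δ, τ, hδ0, hδc, hmapδ, e1, e2⟩
  · linarith
  · -- build the base configuration g = (r δ) x + (r τ + t)
    set σ := r * δ with hσ
    set γ := r * τ + t with hγ
    have hσ0 : 0 < σ := mul_pos hr0 hδ0
    have gmap : ∀ x ∈ E, σ * x + γ ∈ E := by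
      intro x hx
      have hmem := hf (δ * x + τ) (hmapδ x hx)
      have e : r * (δ * x + τ) + t = σ * x + γ := by rw [hσ, hγ]; ring
      rwa [e] at hmem
    have hfa : r * a + t ≤ ρ := by
      have : r * a ≤ r * c := by nlinarith
      have hrc : r * c = ρ - t := by
        rw [hc]; field_simp
      linarith
    have hfb : lam ≤ r * b + t := by
      have : r * d ≤ r * b := by nlinarith
      have hrd : r * d = lam - t := by
        rw [hd]; field_simp
      linarith
    have gl : σ * (lam + ρ) + γ ≤ ρ := by
      have : σ * (lam + ρ) + γ = r * (δ * (lam + ρ) + τ) + t := by rw [hσ, hγ]; ring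
      rw [this, e1]; exact hfa
    have gr : lam ≤ σ * (1 - ρ) + γ := by
      have : σ * (1 - ρ) + γ = r * (δ * (1 - ρ) + τ) + t := by rw [hσ, hγ]; ring
      rw [this, e2]; exact hfb
    have hγ0 : 0 ≤ γ := by
      have := gmap 0 h.zero_mem
      simpa using (h.sub01 (by simpa using this)).1
    have hσlρ : σ * (lam + ρ) ≤ ρ := by linarith
    have hlam0 : 0 < lam := lt_trans h.hρ0 h.hl1
    have hσg2 : lam - ρ ≤ σ * (1 - 2*ρ - lam) := by
      have expand : σ * (1 - 2*ρ - lam) = (σ * (1 - ρ) + γ) - (σ * (lam + ρ) + γ) := by ring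
      rw [expand]; linarith
    have hstar : (lam - ρ) * (lam + ρ) ≤ ρ * (1 - 2*ρ - lam) := by
      have k1 : (lam - ρ) * (lam + ρ) ≤ (σ * (1 - 2*ρ - lam)) * (lam + ρ) :=
        mul_le_mul_of_nonneg_right hσg2 (le_of_lt hlρ0)
      have k2 : (σ * (lam + ρ)) * (1 - 2*ρ - lam) ≤ ρ * (1 - 2*ρ - lam) :=
        mul_le_mul_of_nonneg_right hσlρ (le_of_lt hg2)
      have k3 : (σ * (1 - 2*ρ - lam)) * (lam + ρ) = (σ * (lam + ρ)) * (1 - 2*ρ - lam) := by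
        ring
      linarith
    have hstrict : lam - ρ < (lam + ρ) * (1 - 2*ρ - lam) :=
      strict_aux h.hρ0 h.hl1 hg2 hstar
    -- feed into topMap with s = σ/ρ, v = γ/ρ
    set s := σ / ρ with hs
    set v := γ / ρ with hv
    have hs0 : 0 < s := div_pos hσ0 h.hρ0
    have hsl : s * (lam + ρ) = σ * (lam + ρ) / ρ := by rw [hs]; ring
    have hs1 : s * (lam + ρ) ≤ 1 := by
      rw [hsl, div_le_one h.hρ0]; linarith
    obtain ⟨n', hn'⟩ := exists_pow_lt_of_lt_one
      (show (0:ℝ) < s * (lam + ρ) from mul_pos hs0 hlρ0) hρ1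
    refine h.topMap hstrict n' s v hs0 hn' hs1 ?_ ?_ ?_
    · intro x hx hxle
      have hmem := gmap x hx
      have hxpos : 0 ≤ x := (h.sub01 hx).1
      have hble : σ * x + γ ≤ ρ := by
        have := mul_le_mul_of_nonneg_left hxle (le_of_lt hσ0)
        linarith
      obtain ⟨y, hy, hey⟩ := h.dec1 hmem hble
      have e : s * x + v = (σ * x + γ) / ρ := by rw [hs, hv]; ring
      rw [e, hey, mul_div_cancel_left₀ y hρne]
      exact hy
    · rw [show s * (lam + ρ) + v = (σ * (lam + ρ) + γ) / ρ by rw [hs, hv]; ring,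
        div_le_one h.hρ0]
      linarith
    · rw [← mul_le_mul_iff_left₀ h.hρ0]
      have eL : (1 - s * (1 - 2*ρ - lam)) * ρ = ρ - σ * (1 - 2*ρ - lam) := by
        rw [hs]; field_simp
      have eR : (s * (lam + ρ) + v) * ρ = σ * (lam + ρ) + γ := by
        rw [hs, hv]; field_simp
      rw [eL, eR]
      have : σ * (lam + ρ) + γ = σ * (1 - ρ) + γ - σ * (1 - 2*ρ - lam) := by ring
      rw [this]
      linarith [h.hl1]


theorem Cfg.main (h : Cfg ρ lam E) {r t : ℝ} (hr0 : 0 < r) (hr1 : r < 1)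
    (hf : ∀ x ∈ E, r * x + t ∈ E) :
    (∀ x ∈ E, ∃ y ∈ E, r * x + t = ρ * y) ∨
      (∀ x ∈ E, ∃ y ∈ E, r * x + t = ρ * y + lam) ∨
      (∀ x ∈ E, ∃ y ∈ E, r * x + t = ρ * y + (1 - ρ)) := by
  have hρ1 : ρ < 1 := by linarith [h.hρ3]
  have hlr : lam + ρ < 1 - ρ := by linarith [h.hρ3, h.hl2]
  have ht : t ∈ E := by
    have := hf 0 h.zero_mem
    simpa using this
  have hrt : r + t ∈ E := by
    have := hf 1 h.one_mem
    have e : r * 1 + t = r + t := by ring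
    rwa [e] at this
  rcases h.tri ht with h1 | ⟨h2, h2'⟩ | h3 <;> rcases h.tri hrt with g1 | ⟨g2, g2'⟩ | g3
  · -- (1,1)
    left
    intro x hx
    rcases h.sub01 hx with ⟨hx0, hx1⟩
    refine h.dec1 (hf x hx) ?_
    nlinarith
  · exact (h.crossG1 hr0 hr1 hf h1 g2).elim
  · exact (h.crossG2 hr0 hr1 hf (by linarith [h.hl1, h.hρ0]) g3).elim
  · exfalso; linarith [h.hl1]
  · -- (2,2)
    right; left
    intro x hx
    rcases h.sub01 hx with ⟨hx0, hx1⟩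
    refine h.dec2 (hf x hx) ?_ ?_ <;> nlinarith
  · exact (h.crossG2 hr0 hr1 hf h2' g3).elim
  · exfalso; nlinarith [h.hρ0, h.hρ3]
  · exfalso; linarith
  · -- (3,3)
    right; right
    intro x hx
    rcases h.sub01 hx with ⟨hx0, hx1⟩
    refine h.dec3 (hf x hx) ?_
    nlinarith

end PRIP

theorem positive_ratio_into_piece (ρ lam r t : ℝ) (E : Set ℝ)
    (hρ0 : 0 < ρ) (hρ3 : ρ < 1 / 3) (hl1 : ρ < lam) (hl2 : lam < (1 - ρ) / 2)
    (hEc : IsCompact E) (hEne : E.Nonempty)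
    (hE : E = (fun x : ℝ => ρ * x) '' E ∪ (fun x : ℝ => ρ * x + lam) '' E ∪
        (fun x : ℝ => ρ * x + (1 - ρ)) '' E)
    (hr0 : 0 < r) (hr1 : r < 1)
    (hf : (fun x : ℝ => r * x + t) '' E ⊆ E) :
    (fun x : ℝ => r * x + t) '' E ⊆ (fun x : ℝ => ρ * x) '' E ∨
      (fun x : ℝ => r * x + t) '' E ⊆ (fun x : ℝ => ρ * x + lam) '' E ∨
      (fun x : ℝ => r * x + t) '' E ⊆ (fun x : ℝ => ρ * x + (1 - ρ)) '' E := by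
  have h : PRIP.Cfg ρ lam E := ⟨hρ0, hρ3, hl1, hl2, hEc, hEne, hE⟩
  have hf' : ∀ x ∈ E, r * x + t ∈ E := fun x hx => hf ⟨x, hx, rfl⟩
  rcases h.main hr0 hr1 hf' with H | H | H
  · left
    rintro y ⟨x, hx, rfl⟩
    obtain ⟨z, hz, e⟩ := H x hx
    exact ⟨z, hz, e.symm⟩
  · right; left
    rintro y ⟨x, hx, rfl⟩
    obtain ⟨z, hz, e⟩ := H x hx
    exact ⟨z, hz, e.symm⟩
  · right; right
    rintro y ⟨x, hx, rfl⟩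
    obtain ⟨z, hz, e⟩ := H x hx
    exact ⟨z, hz, e.symm⟩
end

section
/- Let 0 < ρ < 1/3 and let E be the attractor of {φ₁(x)=ρx, φ₂(x)=ρx+ρ, φ₃(x)=ρx+1−ρ}. Then for every 0 < r < 1 and every t ∈ ℝ, the set −rE + t is not contained in φ₁(E) ∪ φ₂(E). -/
set_option linter.unusedVariables false
set_option maxHeartbeats 1000000

namespace NNAux

def Dt (E : Set ℝ) : Set ℝ := {x | x ∈ E ∨ x - 1 ∈ E ∨ x - 2 ∈ E}

variable {ρ : ℝ} {E : Set ℝ}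

lemma memφ1 (hE : E = (fun x : ℝ => ρ * x) '' E ∪ (fun x : ℝ => ρ * x + ρ) '' E ∪
        (fun x : ℝ => ρ * x + (1 - ρ)) '' E) :
    ∀ e ∈ E, ρ * e ∈ E := by
  intro e he
  rw [hE]
  exact Set.mem_union_left _ (Set.mem_union_left _ ⟨e, he, rfl⟩)

lemma memφ2 (hE : E = (fun x : ℝ => ρ * x) '' E ∪ (fun x : ℝ => ρ * x + ρ) '' E ∪
        (fun x : ℝ => ρ * x + (1 - ρ)) '' E) :
    ∀ e ∈ E, ρ * e + ρ ∈ E := by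
  intro e he
  rw [hE]
  exact Set.mem_union_left _ (Set.mem_union_right _ ⟨e, he, rfl⟩)

lemma memφ3 (hE : E = (fun x : ℝ => ρ * x) '' E ∪ (fun x : ℝ => ρ * x + ρ) '' E ∪
        (fun x : ℝ => ρ * x + (1 - ρ)) '' E) :
    ∀ e ∈ E, ρ * e + (1 - ρ) ∈ E := by
  intro e he
  rw [hE]
  exact Set.mem_union_right _ ⟨e, he, rfl⟩

lemma basicE (hρ0 : 0 < ρ) (hρ3 : ρ < 1 / 3)
    (hEc : IsCompact E) (hEne : E.Nonempty)
    (hE : E = (fun x : ℝ => ρ * x) '' E ∪ (fun x : ℝ => ρ * x + ρ) '' E ∪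
        (fun x : ℝ => ρ * x + (1 - ρ)) '' E) :
    (0:ℝ) ∈ E ∧ (1:ℝ) ∈ E ∧ ∀ e ∈ E, 0 ≤ e ∧ e ≤ 1 := by
  have h1ρ : 0 < 1 - ρ := by linarith
  -- sup
  obtain ⟨M, hMeq⟩ : ∃ M : ℝ, M = sSup E := ⟨_, rfl⟩
  have hM : M ∈ E := hMeq ▸ hEc.sSup_mem hEne
  have hle : ∀ e ∈ E, e ≤ M := fun e he => hMeq ▸ le_csSup hEc.bddAbove he
  have h1M : 1 ≤ M := by
    have h := hle _ (memφ3 hE M hM)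
    nlinarith
  have hM1 : M = 1 := by
    have hM' := hM
    rw [hE] at hM'
    simp only [Set.mem_union, Set.mem_image] at hM'
    have : M ≤ 1 := by
      rcases hM' with (⟨x, hx, hxe⟩ | ⟨x, hx, hxe⟩) | ⟨x, hx, hxe⟩ <;>
      · have hxM := hle x hx
        have hprod : ρ * x ≤ ρ * M := mul_le_mul_of_nonneg_left hxM hρ0.le
        nlinarith
    linarith
  -- inf
  obtain ⟨m, hmeq⟩ : ∃ m : ℝ, m = sInf E := ⟨_, rfl⟩
  have hm : m ∈ E := hmeq ▸ hEc.sInf_mem hEne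
  have hge : ∀ e ∈ E, m ≤ e := fun e he => hmeq ▸ csInf_le hEc.bddBelow he
  have hm0' : m ≤ 0 := by
    have h := hge _ (memφ1 hE m hm)
    nlinarith
  have hm0 : m = 0 := by
    have hm' := hm
    rw [hE] at hm'
    simp only [Set.mem_union, Set.mem_image] at hm'
    have : 0 ≤ m := by
      rcases hm' with (⟨x, hx, hxe⟩ | ⟨x, hx, hxe⟩) | ⟨x, hx, hxe⟩ <;>
      · have hxm := hge x hx
        have hprod : ρ * m ≤ ρ * x := mul_le_mul_of_nonneg_left hxm hρ0.le
        nlinarith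
    linarith
  exact ⟨hm0 ▸ hm, hM1 ▸ hM, fun e he => ⟨hm0 ▸ hge e he, hM1 ▸ hle e he⟩⟩

lemma gapE (hρ0 : 0 < ρ) (hρ3 : ρ < 1 / 3)
    (hEc : IsCompact E) (hEne : E.Nonempty)
    (hE : E = (fun x : ℝ => ρ * x) '' E ∪ (fun x : ℝ => ρ * x + ρ) '' E ∪
        (fun x : ℝ => ρ * x + (1 - ρ)) '' E) :
    ∀ e ∈ E, ¬(2*ρ < e ∧ e < 1 - ρ) := by
  obtain ⟨h0E, h1E, hB⟩ := basicE hρ0 hρ3 hEc hEne hE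
  intro e he ⟨hg1, hg2⟩
  rw [hE] at he
  simp only [Set.mem_union, Set.mem_image] at he
  rcases he with (⟨x, hx, hxe⟩ | ⟨x, hx, hxe⟩) | ⟨x, hx, hxe⟩ <;>
    obtain ⟨hx0, hx1⟩ := hB x hx <;> nlinarith

lemma pieceTop (hρ0 : 0 < ρ) (hρ3 : ρ < 1 / 3)
    (hEc : IsCompact E) (hEne : E.Nonempty)
    (hE : E = (fun x : ℝ => ρ * x) '' E ∪ (fun x : ℝ => ρ * x + ρ) '' E ∪
        (fun x : ℝ => ρ * x + (1 - ρ)) '' E) :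
    ∀ e ∈ E, 1 - ρ ≤ e → ∃ e' ∈ E, e = ρ * e' + (1 - ρ) := by
  obtain ⟨h0E, h1E, hB⟩ := basicE hρ0 hρ3 hEc hEne hE
  intro e he hte
  rw [hE] at he
  simp only [Set.mem_union, Set.mem_image] at he
  rcases he with (⟨x, hx, hxe⟩ | ⟨x, hx, hxe⟩) | ⟨x, hx, hxe⟩
  · obtain ⟨hx0, hx1⟩ := hB x hx; nlinarith
  · obtain ⟨hx0, hx1⟩ := hB x hx; nlinarith
  · exact ⟨x, hx, hxe.symm⟩

lemma pieceBot (hρ0 : 0 < ρ) (hρ3 : ρ < 1 / 3)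
    (hEc : IsCompact E) (hEne : E.Nonempty)
    (hE : E = (fun x : ℝ => ρ * x) '' E ∪ (fun x : ℝ => ρ * x + ρ) '' E ∪
        (fun x : ℝ => ρ * x + (1 - ρ)) '' E) :
    ∀ e ∈ E, e ≤ 2*ρ → (∃ e' ∈ E, e = ρ * e') ∨ (∃ e' ∈ E, e = ρ * e' + ρ) := by
  obtain ⟨h0E, h1E, hB⟩ := basicE hρ0 hρ3 hEc hEne hE
  intro e he hte
  rw [hE] at he
  simp only [Set.mem_union, Set.mem_image] at he
  rcases he with (⟨x, hx, hxe⟩ | ⟨x, hx, hxe⟩) | ⟨x, hx, hxe⟩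
  · exact Or.inl ⟨x, hx, hxe.symm⟩
  · exact Or.inr ⟨x, hx, hxe.symm⟩
  · obtain ⟨hx0, hx1⟩ := hB x hx; nlinarith


lemma densE (hρ0 : 0 < ρ) (hρ3 : ρ < 1 / 3)
    (hEc : IsCompact E) (hEne : E.Nonempty)
    (hE : E = (fun x : ℝ => ρ * x) '' E ∪ (fun x : ℝ => ρ * x + ρ) '' E ∪
        (fun x : ℝ => ρ * x + (1 - ρ)) '' E) :
    ∀ x : ℝ, 0 ≤ x → x ≤ 1 → ∃ y ∈ E, |x - y| ≤ (1 - 3*ρ)/2 := by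
  obtain ⟨h0E, h1E, hB⟩ := basicE hρ0 hρ3 hEc hEne hE
  have hc0 : 0 < (1 - 3*ρ)/2 := by linarith
  have hρne : ρ ≠ 0 := ne_of_gt hρ0
  obtain ⟨x₀, hx₀, hmax⟩ := isCompact_Icc.exists_isMaxOn
    (Set.nonempty_Icc.mpr (by norm_num : (0:ℝ) ≤ 1))
    ((Metric.continuous_infDist_pt E).continuousOn)
  have hMle : ∀ z : ℝ, 0 ≤ z → z ≤ 1 →
      Metric.infDist z E ≤ Metric.infDist x₀ E := fun z h1 h2 => hmax ⟨h1, h2⟩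
  have attain : ∀ z : ℝ, 0 ≤ z → z ≤ 1 →
      ∃ y ∈ E, dist z y ≤ Metric.infDist x₀ E := by
    intro z h1 h2
    obtain ⟨y, hy, he⟩ := hEc.exists_infDist_eq_dist hEne z
    exact ⟨y, hy, he ▸ hMle z h1 h2⟩
  have key : Metric.infDist x₀ E ≤ (1 - 3*ρ)/2 := by
    by_contra hM
    push_neg at hM
    have hM0 : 0 < Metric.infDist x₀ E := lt_trans hc0 hM
    have h0 : (0:ℝ) ≤ x₀ := hx₀.1
    have h1' : x₀ ≤ 1 := hx₀.2
    rcases le_or_gt x₀ (2*ρ) with hc | hc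
    · rcases le_or_gt x₀ ρ with hd | hd
      · obtain ⟨y, hy, hdist⟩ := attain (x₀/ρ) (div_nonneg h0 hρ0.le)
          (by rw [div_le_one hρ0]; linarith)
        have hmem := memφ1 hE y hy
        have hle2 : Metric.infDist x₀ E ≤ dist x₀ (ρ*y) :=
          Metric.infDist_le_dist_of_mem hmem
        have heq : dist x₀ (ρ*y) = ρ * dist (x₀/ρ) y := by
          rw [Real.dist_eq, Real.dist_eq]
          have h : x₀ - ρ*y = ρ*(x₀/ρ - y) := by field_simp
          rw [h, abs_mul, abs_of_pos hρ0]
        have : dist (x₀/ρ) y ≤ Metric.infDist x₀ E := hdist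
        nlinarith
      · obtain ⟨y, hy, hdist⟩ := attain ((x₀-ρ)/ρ)
          (div_nonneg (by linarith) hρ0.le)
          (by rw [div_le_one hρ0]; linarith)
        have hmem := memφ2 hE y hy
        have hle2 : Metric.infDist x₀ E ≤ dist x₀ (ρ*y+ρ) :=
          Metric.infDist_le_dist_of_mem hmem
        have heq : dist x₀ (ρ*y+ρ) = ρ * dist ((x₀-ρ)/ρ) y := by
          rw [Real.dist_eq, Real.dist_eq]
          have h : x₀ - (ρ*y+ρ) = ρ*((x₀-ρ)/ρ - y) := by field_simp; ring
          rw [h, abs_mul, abs_of_pos hρ0]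
        nlinarith
    · rcases le_or_gt x₀ (1-ρ) with hd | hd
      · have h2ρ : 2*ρ ∈ E := by
          have := memφ2 hE 1 h1E
          have h : ρ * 1 + ρ = 2*ρ := by ring
          rwa [h] at this
        have h1ρE : 1 - ρ ∈ E := by
          have := memφ3 hE 0 h0E
          have h : ρ * 0 + (1-ρ) = 1-ρ := by ring
          rwa [h] at this
        rcases le_or_gt x₀ ((1+ρ)/2) with he | he
        · have hle2 : Metric.infDist x₀ E ≤ dist x₀ (2*ρ) :=
            Metric.infDist_le_dist_of_mem h2ρ
          rw [Real.dist_eq, abs_of_nonneg (by linarith)] at hle2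
          linarith
        · have hle2 : Metric.infDist x₀ E ≤ dist x₀ (1-ρ) :=
            Metric.infDist_le_dist_of_mem h1ρE
          rw [Real.dist_eq, abs_of_nonpos (by linarith), neg_sub] at hle2
          linarith
      · obtain ⟨y, hy, hdist⟩ := attain ((x₀-(1-ρ))/ρ)
          (div_nonneg (by linarith) hρ0.le)
          (by rw [div_le_one hρ0]; linarith)
        have hmem := memφ3 hE y hy
        have hle2 : Metric.infDist x₀ E ≤ dist x₀ (ρ*y+(1-ρ)) :=
          Metric.infDist_le_dist_of_mem hmem
        have heq : dist x₀ (ρ*y+(1-ρ)) = ρ * dist ((x₀-(1-ρ))/ρ) y := by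
          rw [Real.dist_eq, Real.dist_eq]
          have h : x₀ - (ρ*y+(1-ρ)) = ρ*((x₀-(1-ρ))/ρ - y) := by field_simp; ring
          rw [h, abs_mul, abs_of_pos hρ0]
        nlinarith
  intro x h1 h2
  obtain ⟨y, hy, hd⟩ := attain x h1 h2
  refine ⟨y, hy, ?_⟩
  rw [← Real.dist_eq]
  exact le_trans hd key

lemma DtSub (hρ0 : 0 < ρ) (hρ3 : ρ < 1 / 3)
    (hEc : IsCompact E) (hEne : E.Nonempty)
    (hE : E = (fun x : ℝ => ρ * x) '' E ∪ (fun x : ℝ => ρ * x + ρ) '' E ∪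
        (fun x : ℝ => ρ * x + (1 - ρ)) '' E) :
    ∀ x ∈ Dt E, 0 ≤ x ∧ x ≤ 3 := by
  obtain ⟨h0E, h1E, hB⟩ := basicE hρ0 hρ3 hEc hEne hE
  rintro x (h | h | h) <;> obtain ⟨ha, hb⟩ := hB _ h <;> constructor <;> linarith

lemma densD (hρ0 : 0 < ρ) (hρ3 : ρ < 1 / 3)
    (hEc : IsCompact E) (hEne : E.Nonempty)
    (hE : E = (fun x : ℝ => ρ * x) '' E ∪ (fun x : ℝ => ρ * x + ρ) '' E ∪
        (fun x : ℝ => ρ * x + (1 - ρ)) '' E) :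
    ∀ x : ℝ, 0 ≤ x → x ≤ 3 → ∃ y ∈ Dt E, |x - y| ≤ (1 - 3*ρ)/2 := by
  intro x h1 h2
  rcases le_or_gt x 1 with h | h
  · obtain ⟨y, hy, hd⟩ := densE hρ0 hρ3 hEc hEne hE x h1 h
    exact ⟨y, Or.inl hy, hd⟩
  · rcases le_or_gt x 2 with h' | h'
    · obtain ⟨y, hy, hd⟩ := densE hρ0 hρ3 hEc hEne hE (x-1) (by linarith) (by linarith)
      refine ⟨y+1, Or.inr (Or.inl (by have : y + 1 - 1 = y := by ring
                                      rw [this]; exact hy)), ?_⟩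
      have : x - (y+1) = (x-1) - y := by ring
      rw [this]; exact hd
    · obtain ⟨y, hy, hd⟩ := densE hρ0 hρ3 hEc hEne hE (x-2) (by linarith) (by linarith)
      refine ⟨y+2, Or.inr (Or.inr (by have : y + 2 - 2 = y := by ring
                                      rw [this]; exact hy)), ?_⟩
      have : x - (y+2) = (x-2) - y := by ring
      rw [this]; exact hd

lemma gapD (hρ0 : 0 < ρ) (hρ3 : ρ < 1 / 3)
    (hEc : IsCompact E) (hEne : E.Nonempty)
    (hE : E = (fun x : ℝ => ρ * x) '' E ∪ (fun x : ℝ => ρ * x + ρ) '' E ∪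
        (fun x : ℝ => ρ * x + (1 - ρ)) '' E) :
    ∀ x ∈ Dt E, ∀ j : ℕ, ¬((j:ℝ) + 2*ρ < x ∧ x < (j:ℝ) + 1 - ρ) := by
  obtain ⟨h0E, h1E, hB⟩ := basicE hρ0 hρ3 hEc hEne hE
  have hgap := gapE hρ0 hρ3 hEc hEne hE
  rintro x (h | h | h) j ⟨hg1, hg2⟩ <;> obtain ⟨ha, hb⟩ := hB _ h
  · have hj0 : j = 0 := by
      by_contra hcon
      have : (1:ℝ) ≤ (j:ℝ) := by exact_mod_cast Nat.one_le_iff_ne_zero.mpr hcon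
      linarith
    subst hj0
    exact hgap x h ⟨by push_cast at hg1; linarith, by push_cast at hg2; linarith⟩
  · have hj1 : j = 1 := by
      have hle : j ≤ 1 := by
        by_contra hcon
        push_neg at hcon
        have : (2:ℝ) ≤ (j:ℝ) := by exact_mod_cast hcon
        linarith
      have hge : 1 ≤ j := by
        by_contra hcon
        push_neg at hcon
        interval_cases j
        push_cast at hg2
        linarith
      omega
    subst hj1
    exact hgap _ h ⟨by push_cast at hg1; linarith, by push_cast at hg2; linarith⟩
  · have hj2 : j = 2 := by
      have hle : j ≤ 2 := by
        by_contra hcon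
        push_neg at hcon
        have : (3:ℝ) ≤ (j:ℝ) := by exact_mod_cast hcon
        linarith
      have hge : 2 ≤ j := by
        by_contra hcon
        push_neg at hcon
        interval_cases j <;> push_cast at hg2 <;> linarith
      omega
    subst hj2
    exact hgap _ h ⟨by push_cast at hg1; linarith, by push_cast at hg2; linarith⟩

lemma locD (hρ0 : 0 < ρ) (hρ3 : ρ < 1 / 3)
    (hEc : IsCompact E) (hEne : E.Nonempty)
    (hE : E = (fun x : ℝ => ρ * x) '' E ∪ (fun x : ℝ => ρ * x + ρ) '' E ∪
        (fun x : ℝ => ρ * x + (1 - ρ)) '' E) :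
    ∀ x ∈ Dt E, ∃ j : ℕ, j ≤ 3 ∧ (j:ℝ) - ρ ≤ x ∧ x ≤ (j:ℝ) + 2*ρ := by
  intro x hx
  obtain ⟨hx0, hx3⟩ := DtSub hρ0 hρ3 hEc hEne hE x hx
  have hgap := gapD hρ0 hρ3 hEc hEne hE x hx
  rcases le_or_gt x (2*ρ) with h | h
  · exact ⟨0, by norm_num, by push_cast; linarith, by push_cast; linarith⟩
  · rcases le_or_gt x (1+2*ρ) with h2 | h2
    · refine ⟨1, by norm_num, ?_, by push_cast; linarith⟩
      push_cast
      by_contra hcon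
      push_neg at hcon
      exact hgap 0 ⟨by push_cast; linarith, by push_cast; linarith⟩
    · rcases le_or_gt x (2+2*ρ) with h3 | h3
      · refine ⟨2, by norm_num, ?_, by push_cast; linarith⟩
        push_cast
        by_contra hcon
        push_neg at hcon
        exact hgap 1 ⟨by push_cast; linarith, by push_cast; linarith⟩
      · refine ⟨3, by norm_num, ?_, by push_cast; linarith⟩
        push_cast
        by_contra hcon
        push_neg at hcon
        exact hgap 2 ⟨by push_cast; linarith, by push_cast; linarith⟩


lemma idD (hρ0 : 0 < ρ) (hρ3 : ρ < 1 / 3)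
    (hEc : IsCompact E) (hEne : E.Nonempty)
    (hE : E = (fun x : ℝ => ρ * x) '' E ∪ (fun x : ℝ => ρ * x + ρ) '' E ∪
        (fun x : ℝ => ρ * x + (1 - ρ)) '' E) :
    ∀ (j : ℕ) (x : ℝ), x ∈ Dt E → (j:ℝ) - ρ ≤ x → x ≤ (j:ℝ) + 2*ρ →
      (x - ((j:ℝ) - ρ))/ρ ∈ Dt E := by
  obtain ⟨h0E, h1E, hB⟩ := basicE hρ0 hρ3 hEc hEne hE
  have hρne : ρ ≠ 0 := ne_of_gt hρ0
  intro j x hx hl hu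
  rcases hx with h | h | h
  · obtain ⟨ha, hb⟩ := hB _ h
    have hj1 : j ≤ 1 := by
      by_contra hcon
      push_neg at hcon
      have : (2:ℝ) ≤ (j:ℝ) := by exact_mod_cast hcon
      linarith
    interval_cases j
    · have hx2ρ : x ≤ 2*ρ := by push_cast at hu; linarith
      rcases pieceBot hρ0 hρ3 hEc hEne hE x h hx2ρ with ⟨e', he', heq⟩ | ⟨e', he', heq⟩
      · have hgoal : (x - (((0:ℕ):ℝ) - ρ))/ρ = e' + 1 := by
          rw [div_eq_iff hρne, heq]; push_cast; ring
        rw [hgoal]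
        exact Or.inr (Or.inl (by simpa using he'))
      · have hgoal : (x - (((0:ℕ):ℝ) - ρ))/ρ = e' + 2 := by
          rw [div_eq_iff hρne, heq]; push_cast; ring
        rw [hgoal]
        exact Or.inr (Or.inr (by simpa using he'))
    · have hx1ρ : 1 - ρ ≤ x := by push_cast at hl; linarith
      obtain ⟨e', he', heq⟩ := pieceTop hρ0 hρ3 hEc hEne hE x h hx1ρ
      have hgoal : (x - (((1:ℕ):ℝ) - ρ))/ρ = e' := by
        rw [div_eq_iff hρne, heq]; push_cast; ring
      rw [hgoal]
      exact Or.inl he'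
  · obtain ⟨ha, hb⟩ := hB _ h
    have hj2 : j ≤ 2 := by
      by_contra hcon
      push_neg at hcon
      have : (3:ℝ) ≤ (j:ℝ) := by exact_mod_cast hcon
      linarith
    have hj1 : 1 ≤ j := by
      by_contra hcon
      push_neg at hcon
      interval_cases j
      push_cast at hu
      linarith
    interval_cases j
    · have hx2ρ : x - 1 ≤ 2*ρ := by push_cast at hu; linarith
      rcases pieceBot hρ0 hρ3 hEc hEne hE _ h hx2ρ with ⟨e', he', heq⟩ | ⟨e', he', heq⟩
      · have hgoal : (x - (((1:ℕ):ℝ) - ρ))/ρ = e' + 1 := by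
          rw [div_eq_iff hρne]; push_cast
          have hx' : x = ρ * e' + 1 := by linarith
          rw [hx']; ring
        rw [hgoal]
        exact Or.inr (Or.inl (by simpa using he'))
      · have hgoal : (x - (((1:ℕ):ℝ) - ρ))/ρ = e' + 2 := by
          rw [div_eq_iff hρne]; push_cast
          have hx' : x = ρ * e' + ρ + 1 := by linarith
          rw [hx']; ring
        rw [hgoal]
        exact Or.inr (Or.inr (by simpa using he'))
    · have hx1ρ : 1 - ρ ≤ x - 1 := by push_cast at hl; linarith
      obtain ⟨e', he', heq⟩ := pieceTop hρ0 hρ3 hEc hEne hE _ h hx1ρ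
      have hgoal : (x - (((2:ℕ):ℝ) - ρ))/ρ = e' := by
        rw [div_eq_iff hρne]; push_cast
        have hx' : x = ρ * e' + (1 - ρ) + 1 := by linarith
        rw [hx']; ring
      rw [hgoal]
      exact Or.inl he'
  · obtain ⟨ha, hb⟩ := hB _ h
    have hj3 : j ≤ 3 := by
      by_contra hcon
      push_neg at hcon
      have : (4:ℝ) ≤ (j:ℝ) := by exact_mod_cast hcon
      linarith
    have hj2 : 2 ≤ j := by
      by_contra hcon
      push_neg at hcon
      interval_cases j <;> push_cast at hu <;> linarith
    interval_cases j
    · have hx2ρ : x - 2 ≤ 2*ρ := by push_cast at hu; linarith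
      rcases pieceBot hρ0 hρ3 hEc hEne hE _ h hx2ρ with ⟨e', he', heq⟩ | ⟨e', he', heq⟩
      · have hgoal : (x - (((2:ℕ):ℝ) - ρ))/ρ = e' + 1 := by
          rw [div_eq_iff hρne]; push_cast
          have hx' : x = ρ * e' + 2 := by linarith
          rw [hx']; ring
        rw [hgoal]
        exact Or.inr (Or.inl (by simpa using he'))
      · have hgoal : (x - (((2:ℕ):ℝ) - ρ))/ρ = e' + 2 := by
          rw [div_eq_iff hρne]; push_cast
          have hx' : x = ρ * e' + ρ + 2 := by linarith
          rw [hx']; ring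
        rw [hgoal]
        exact Or.inr (Or.inr (by simpa using he'))
    · have hx1ρ : 1 - ρ ≤ x - 2 := by push_cast at hl; linarith
      obtain ⟨e', he', heq⟩ := pieceTop hρ0 hρ3 hEc hEne hE _ h hx1ρ
      have hgoal : (x - (((3:ℕ):ℝ) - ρ))/ρ = e' := by
        rw [div_eq_iff hρne]; push_cast
        have hx' : x = ρ * e' + (1 - ρ) + 2 := by linarith
        rw [hx']; ring
      rw [hgoal]
      exact Or.inl he'

lemma sameCluster (hρ0 : 0 < ρ) (hρ3 : ρ < 1 / 3)
    (hEc : IsCompact E) (hEne : E.Nonempty)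
    (hE : E = (fun x : ℝ => ρ * x) '' E ∪ (fun x : ℝ => ρ * x + ρ) '' E ∪
        (fun x : ℝ => ρ * x + (1 - ρ)) '' E)
    (A : Set ℝ) (hA0 : (0:ℝ) ∈ A)
    (hden : ∀ u ∈ A, ∀ v ∈ A, ∀ x : ℝ, u ≤ x → x ≤ v → ∃ y ∈ A, |x - y| ≤ (1 - 3*ρ)/2)
    (s q : ℝ) (hs0 : 0 < s) (hs1 : s < 1)
    (hX : ∀ a ∈ A, q - s*a ∈ Dt E) :
    ∃ j : ℕ, j ≤ 3 ∧ ∀ a ∈ A, (j:ℝ) - ρ ≤ q - s*a ∧ q - s*a ≤ (j:ℝ) + 2*ρ := by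
  have hgap := gapD hρ0 hρ3 hEc hEne hE
  have hq' : q ∈ Dt E := by simpa using hX 0 hA0
  obtain ⟨j₀, hj₀3, hj₀l, hj₀u⟩ := locD hρ0 hρ3 hEc hEne hE q hq'
  have hc0 : 0 < (1 - 3*ρ)/2 := by linarith
  have nostrad : ∀ a₁ ∈ A, ∀ a₂ ∈ A, ∀ j₁ j₂ : ℕ,
      q - s*a₁ ≤ (j₁:ℝ) + 2*ρ → (j₂:ℝ) - ρ ≤ q - s*a₂ → j₁ < j₂ → False := by
    intro a₁ ha₁ a₂ ha₂ j₁ j₂ hup hlow hlt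
    have hj₂1 : (j₁:ℝ) + 1 ≤ (j₂:ℝ) := by exact_mod_cast Nat.succ_le_of_lt hlt
    set c := (1 - 3*ρ)/2 with hc
    set mid := (j₁:ℝ) + 2*ρ + c with hmid
    have h1 : q - s*a₁ ≤ mid := by rw [hmid]; linarith
    have h2 : mid ≤ q - s*a₂ := by rw [hmid, hc]; linarith
    set w := (q - mid)/s with hw
    have hmw : mid = q - s*w := by rw [hw]; field_simp; ring
    have hwa₁ : w ≤ a₁ := by
      have hsw : s*w ≤ s*a₁ := by rw [hmw] at h1; linarith
      exact le_of_mul_le_mul_left hsw hs0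
    have hwa₂ : a₂ ≤ w := by
      have hsw : s*a₂ ≤ s*w := by rw [hmw] at h2; linarith
      exact le_of_mul_le_mul_left hsw hs0
    obtain ⟨y, hyA, hyc⟩ := hden a₂ ha₂ a₁ ha₁ w hwa₂ hwa₁
    have hP := hX y hyA
    have hgap₁ := hgap _ hP j₁
    have hd : |mid - (q - s*y)| ≤ s * c := by
      have heq : mid - (q - s*y) = s*(y - w) := by rw [hmw]; ring
      rw [heq, abs_mul, abs_of_pos hs0]
      have hyc' : |y - w| ≤ c := by rw [abs_sub_comm]; exact hyc
      nlinarith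
    have hsc : s * c < c := by nlinarith
    have habs := abs_le.mp hd
    apply hgap₁
    constructor
    · linarith [habs.2, hsc]
    · linarith [habs.1, hsc]
  refine ⟨j₀, hj₀3, ?_⟩
  intro a ha
  obtain ⟨j₁, hj₁3, hj₁l, hj₁u⟩ := locD hρ0 hρ3 hEc hEne hE _ (hX a ha)
  have hj : j₁ = j₀ := by
    rcases lt_trichotomy j₁ j₀ with h | h | h
    · exact absurd (nostrad a ha 0 hA0 j₁ j₀ hj₁u (by simpa using hj₀l) h) (by simp)
    · exact h
    · exact absurd (nostrad 0 hA0 a ha j₀ j₁ (by simpa using hj₀u) hj₁l h) (by simp)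
  rw [hj] at hj₁l hj₁u
  exact ⟨hj₁l, hj₁u⟩

lemma powE (hρ0 : 0 < ρ) (hρ3 : ρ < 1 / 3)
    (hEc : IsCompact E) (hEne : E.Nonempty)
    (hE : E = (fun x : ℝ => ρ * x) '' E ∪ (fun x : ℝ => ρ * x + ρ) '' E ∪
        (fun x : ℝ => ρ * x + (1 - ρ)) '' E) :
    ∀ n : ℕ, ρ^n ∈ E := by
  obtain ⟨h0E, h1E, hB⟩ := basicE hρ0 hρ3 hEc hEne hE
  intro n
  induction n with
  | zero => simpa using h1E
  | succ n ih =>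
    rw [pow_succ, mul_comm]
    exact memφ1 hE _ ih

lemma reflD (hρ0 : 0 < ρ) (hρ3 : ρ < 1 / 3)
    (hEc : IsCompact E) (hEne : E.Nonempty)
    (hE : E = (fun x : ℝ => ρ * x) '' E ∪ (fun x : ℝ => ρ * x + ρ) '' E ∪
        (fun x : ℝ => ρ * x + (1 - ρ)) '' E) :
    ¬ (∀ d ∈ Dt E, 3 - d ∈ Dt E) := by
  intro hrefl
  obtain ⟨h0E, h1E, hB⟩ := basicE hρ0 hρ3 hEc hEne hE
  obtain ⟨n₁, hn₁⟩ := exists_pow_lt_of_lt_one (show (0:ℝ) < 1 - 3*ρ by linarith)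
    (show ρ < 1 by linarith)
  have hpow_pos : 0 < ρ^(n₁+1) := pow_pos hρ0 _
  have hρ1 : ρ ≤ 1 := by linarith
  have hpow_le : ρ^(n₁+1) ≤ ρ^n₁ := pow_le_pow_of_le_one hρ0.le hρ1 (Nat.le_succ n₁)
  have hpow_lt : ρ^(n₁+1) < 1 - 3*ρ := lt_of_le_of_lt hpow_le hn₁
  have hpow_leρ : ρ^(n₁+1) ≤ ρ := by
    calc ρ^(n₁+1) ≤ ρ^1 := pow_le_pow_of_le_one hρ0.le hρ1 (by omega)
    _ = ρ := pow_one ρ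
  set p := ρ + ρ^(n₁+1) with hp
  have hpE : p ∈ E := by
    have h := memφ2 hE (ρ^n₁) (powE hρ0 hρ3 hEc hEne hE n₁)
    have heq : ρ * ρ^n₁ + ρ = p := by rw [hp, pow_succ]; ring
    rwa [heq] at h
  have h3p := hrefl p (Or.inl hpE)
  rcases h3p with h | h | h
  · have := (hB _ h).2
    linarith
  · have := (hB _ h).2
    linarith
  · refine gapE hρ0 hρ3 hEc hEne hE _ h ⟨?_, ?_⟩
    · linarith
    · linarith


lemma densDt' (hρ0 : 0 < ρ) (hρ3 : ρ < 1 / 3)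
    (hEc : IsCompact E) (hEne : E.Nonempty)
    (hE : E = (fun x : ℝ => ρ * x) '' E ∪ (fun x : ℝ => ρ * x + ρ) '' E ∪
        (fun x : ℝ => ρ * x + (1 - ρ)) '' E) :
    ∀ u ∈ Dt E, ∀ v ∈ Dt E, ∀ x : ℝ, u ≤ x → x ≤ v → ∃ y ∈ Dt E, |x - y| ≤ (1 - 3*ρ)/2 := by
  intro u hu v hv x h1 h2
  obtain ⟨hu0, _⟩ := DtSub hρ0 hρ3 hEc hEne hE u hu
  obtain ⟨_, hv3⟩ := DtSub hρ0 hρ3 hEc hEne hE v hv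
  exact densD hρ0 hρ3 hEc hEne hE x (by linarith) (by linarith)

lemma densE' (hρ0 : 0 < ρ) (hρ3 : ρ < 1 / 3)
    (hEc : IsCompact E) (hEne : E.Nonempty)
    (hE : E = (fun x : ℝ => ρ * x) '' E ∪ (fun x : ℝ => ρ * x + ρ) '' E ∪
        (fun x : ℝ => ρ * x + (1 - ρ)) '' E) :
    ∀ u ∈ E, ∀ v ∈ E, ∀ x : ℝ, u ≤ x → x ≤ v → ∃ y ∈ E, |x - y| ≤ (1 - 3*ρ)/2 := by
  obtain ⟨h0E, h1E, hB⟩ := basicE hρ0 hρ3 hEc hEne hE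
  intro u hu v hv x h1 h2
  obtain ⟨hu0, _⟩ := hB u hu
  obtain ⟨_, hv1⟩ := hB v hv
  exact densE hρ0 hρ3 hEc hEne hE x (by linarith) (by linarith)

lemma big (hρ0 : 0 < ρ) (hρ3 : ρ < 1 / 3)
    (hEc : IsCompact E) (hEne : E.Nonempty)
    (hE : E = (fun x : ℝ => ρ * x) '' E ∪ (fun x : ℝ => ρ * x + ρ) '' E ∪
        (fun x : ℝ => ρ * x + (1 - ρ)) '' E) :
    ∀ r t : ℝ, 1 ≤ r → r ≤ 3 → ¬ (∀ e ∈ E, t - r*e ∈ Dt E) := by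
  obtain ⟨h0E, h1E, hB⟩ := basicE hρ0 hρ3 hEc hEne hE
  have hρne : ρ ≠ 0 := ne_of_gt hρ0
  intro r t hr1 hr3 H
  have chunk : ∀ d ∈ Dt E, ρ^2*d + (ρ - ρ^2) ∈ E := by
    rintro d (h | h | h)
    · have h3 := memφ3 hE d h
      have h1 := memφ1 hE _ h3
      have heq : ρ*(ρ*d+(1-ρ)) = ρ^2*d + (ρ-ρ^2) := by ring
      rwa [heq] at h1
    · have hA := memφ1 hE _ h
      have h2 := memφ2 hE _ hA
      have heq : ρ*(ρ*(d-1)) + ρ = ρ^2*d + (ρ-ρ^2) := by ring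
      rwa [heq] at h2
    · have hA := memφ2 hE _ h
      have h2 := memφ2 hE _ hA
      have heq : ρ*(ρ*(d-2)+ρ) + ρ = ρ^2*d + (ρ-ρ^2) := by ring
      rwa [heq] at h2
  have hK : ∀ d ∈ Dt E, (t - r*ρ + r*ρ^2) - (r*ρ^2)*d ∈ Dt E := by
    intro d hd
    have h := H _ (chunk d hd)
    have heq : t - r*(ρ^2*d + (ρ - ρ^2)) = (t - r*ρ + r*ρ^2) - (r*ρ^2)*d := by ring
    rwa [heq] at h
  obtain ⟨j, hj3, hloc1⟩ := sameCluster hρ0 hρ3 hEc hEne hE (Dt E) (Or.inl h0E)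
    (densDt' hρ0 hρ3 hEc hEne hE) (r*ρ^2) (t - r*ρ + r*ρ^2)
    (by positivity) (by nlinarith) hK
  set q₂ := (t - r*ρ + r*ρ^2 - ((j:ℝ) - ρ))/ρ with hq₂
  have hK' : ∀ d ∈ Dt E, q₂ - (r*ρ)*d ∈ Dt E := by
    intro d hd
    have hx := hK d hd
    have hb := hloc1 d hd
    have hmem := idD hρ0 hρ3 hEc hEne hE j _ hx hb.1 hb.2
    have heq : ((t - r*ρ + r*ρ^2) - (r*ρ^2)*d - ((j:ℝ) - ρ))/ρ = q₂ - (r*ρ)*d := by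
      rw [hq₂]; field_simp; ring
    rwa [heq] at hmem
  obtain ⟨j', hj'3, hloc2⟩ := sameCluster hρ0 hρ3 hEc hEne hE (Dt E) (Or.inl h0E)
    (densDt' hρ0 hρ3 hEc hEne hE) (r*ρ) q₂
    (by positivity) (by nlinarith) hK'
  have h3Dt : (3:ℝ) ∈ Dt E := Or.inr (Or.inr (by norm_num; exact h1E))
  have hb0 := hloc2 0 (Or.inl h0E)
  have hb3 := hloc2 3 h3Dt
  have hq₂u : q₂ ≤ (j':ℝ) + 2*ρ := by
    have := hb0.2; simpa using this
  have hq₂l3 : (j':ℝ) - ρ ≤ q₂ - (r*ρ)*3 := hb3.1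
  have hr_le1 : r ≤ 1 := by nlinarith
  have hr : r = 1 := le_antisymm hr_le1 hr1
  have hq₂eq : q₂ = (j':ℝ) + 2*ρ := by
    rw [hr] at hq₂l3
    apply le_antisymm hq₂u
    linarith
  have hrefl : ∀ d ∈ Dt E, 3 - d ∈ Dt E := by
    intro d hd
    have hx := hK' d hd
    have hb := hloc2 d hd
    have hmem := idD hρ0 hρ3 hEc hEne hE j' _ hx hb.1 hb.2
    have heq : (q₂ - (r*ρ)*d - ((j':ℝ) - ρ))/ρ = 3 - d := by
      rw [hq₂eq, hr]; field_simp; ring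
    rwa [heq] at hmem
  exact reflD hρ0 hρ3 hEc hEne hE hrefl

lemma mainD (hρ0 : 0 < ρ) (hρ3 : ρ < 1 / 3)
    (hEc : IsCompact E) (hEne : E.Nonempty)
    (hE : E = (fun x : ℝ => ρ * x) '' E ∪ (fun x : ℝ => ρ * x + ρ) '' E ∪
        (fun x : ℝ => ρ * x + (1 - ρ)) '' E) :
    ∀ n : ℕ, ∀ r t : ℝ, 0 < r → r ≤ 3 → ρ^n ≤ r → ¬ (∀ e ∈ E, t - r*e ∈ Dt E) := by
  obtain ⟨h0E, h1E, hB⟩ := basicE hρ0 hρ3 hEc hEne hE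
  intro n
  induction n with
  | zero =>
    intro r t hr0 hr3 hpow
    exact big hρ0 hρ3 hEc hEne hE r t (by simpa using hpow) hr3
  | succ n ih =>
    intro r t hr0 hr3 hpow H
    rcases le_or_gt 1 r with hr1 | hr1
    · exact big hρ0 hρ3 hEc hEne hE r t hr1 hr3 H
    · obtain ⟨j, hj3, hloc⟩ := sameCluster hρ0 hρ3 hEc hEne hE E h0E
        (densE' hρ0 hρ3 hEc hEne hE) r t hr0 hr1 H
      have ht_u : t ≤ (j:ℝ) + 2*ρ := by
        have := (hloc 0 h0E).2; simpa using this
      have ht_l : (j:ℝ) - ρ ≤ t - r := by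
        have := (hloc 1 h1E).1; simpa using this
      have hrρ : r ≤ 3*ρ := by linarith
      have H' : ∀ e ∈ E, (t - ((j:ℝ) - ρ))/ρ - (r/ρ)*e ∈ Dt E := by
        intro e he
        have hx := H e he
        have hb := hloc e he
        have hmem := idD hρ0 hρ3 hEc hEne hE j _ hx hb.1 hb.2
        have heq : (t - r*e - ((j:ℝ) - ρ))/ρ = (t - ((j:ℝ) - ρ))/ρ - (r/ρ)*e := by
          ring
        rwa [heq] at hmem
      refine ih (r/ρ) ((t - ((j:ℝ) - ρ))/ρ) (div_pos hr0 hρ0) ?_ ?_ H'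
      · rw [div_le_iff₀ hρ0]; linarith
      · rw [le_div_iff₀ hρ0]
        calc ρ^n * ρ = ρ^(n+1) := (pow_succ ρ n).symm
          _ ≤ r := hpow

end NNAux

theorem no_negative_any_translation (ρ : ℝ) (E : Set ℝ)
    (hρ0 : 0 < ρ) (hρ3 : ρ < 1 / 3)
    (hEc : IsCompact E) (hEne : E.Nonempty)
    (hE : E = (fun x : ℝ => ρ * x) '' E ∪ (fun x : ℝ => ρ * x + ρ) '' E ∪
        (fun x : ℝ => ρ * x + (1 - ρ)) '' E) :
    ∀ r t : ℝ, 0 < r → r < 1 →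
      ¬ (fun x : ℝ => -r * x + t) '' E ⊆
          (fun x : ℝ => ρ * x) '' E ∪ (fun x : ℝ => ρ * x + ρ) '' E := by
  intro r t hr0 hr1 H
  obtain ⟨h0E, h1E, hB⟩ := NNAux.basicE hρ0 hρ3 hEc hEne hE
  have hρne : ρ ≠ 0 := ne_of_gt hρ0
  have hmem : ∀ e ∈ E, -r*e + t ∈
      (fun x : ℝ => ρ * x) '' E ∪ (fun x : ℝ => ρ * x + ρ) '' E := by
    intro e he
    exact H (Set.mem_image_of_mem _ he)
  have H' : ∀ e ∈ E, (t + ρ)/ρ - (r/ρ)*e ∈ NNAux.Dt E := by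
    intro e he
    have h := hmem e he
    simp only [Set.mem_union, Set.mem_image] at h
    rcases h with ⟨x, hx, hxe⟩ | ⟨x, hx, hxe⟩
    · have heq : (t + ρ)/ρ - (r/ρ)*e = x + 1 := by
        have heq' : ρ * ((t + ρ)/ρ - (r/ρ)*e) = ρ * (x + 1) := by
          field_simp
          linarith
        exact mul_left_cancel₀ hρne heq'
      rw [heq]
      exact Or.inr (Or.inl (by simpa using hx))
    · have heq : (t + ρ)/ρ - (r/ρ)*e = x + 2 := by
        have heq' : ρ * ((t + ρ)/ρ - (r/ρ)*e) = ρ * (x + 2) := by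
          field_simp
          linarith
        exact mul_left_cancel₀ hρne heq'
      rw [heq]
      exact Or.inr (Or.inr (by simpa using hx))
  have hr2ρ : r ≤ 2*ρ := by
    have h1 := hmem 0 h0E
    have h2 := hmem 1 h1E
    simp only [Set.mem_union, Set.mem_image] at h1 h2
    have ht2ρ : t ≤ 2*ρ := by
      rcases h1 with ⟨x, hx, hxe⟩ | ⟨x, hx, hxe⟩ <;>
        obtain ⟨hx0, hx1⟩ := hB x hx <;> nlinarith
    have htr : 0 ≤ t - r := by
      rcases h2 with ⟨x, hx, hxe⟩ | ⟨x, hx, hxe⟩ <;>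
        obtain ⟨hx0, hx1⟩ := hB x hx <;> nlinarith
    linarith
  have hr'0 : 0 < r/ρ := div_pos hr0 hρ0
  obtain ⟨n, hn⟩ := exists_pow_lt_of_lt_one hr'0 (show ρ < 1 by linarith)
  refine NNAux.mainD hρ0 hρ3 hEc hEne hE n (r/ρ) ((t + ρ)/ρ) hr'0 ?_ hn.le H'
  rw [div_le_iff₀ hρ0]
  linarith
end
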